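/- Let X be a Banach lattice. If X has the Bishop–Phelps–Bollobás property for positive functionals, then X is weakly monotone. -/

import Mathlib

section Helpers
set_option linter.unusedSectionVars false

variable {X : Type*} [NormedAddCommGroup X] [Lattice X] [IsOrderedAddMonoid X] [HasSolidNorm X] [NormedSpace ℝ X]
  [PosSMulStrictMono ℝ X] [PosSMulReflectLT ℝ X]

private lemma my_smul_sup {c : ℝ} (hc : 0 < c) (a b : X) : c • (a ⊔ b) = c • a ⊔ c • b := by
  apply le_antisymm
  · have h1 : a ≤ c⁻¹ • (c • a ⊔ c • b) :=
      calc a = c⁻¹ • (c • a) := (inv_smul_smul₀ hc.ne' a).symm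
        _ ≤ c⁻¹ • (c • a ⊔ c • b) :=
            smul_le_smul_of_nonneg_left le_sup_left (inv_nonneg.mpr hc.le)
    have h2 : b ≤ c⁻¹ • (c • a ⊔ c • b) :=
      calc b = c⁻¹ • (c • b) := (inv_smul_smul₀ hc.ne' b).symm
        _ ≤ c⁻¹ • (c • a ⊔ c • b) :=
            smul_le_smul_of_nonneg_left le_sup_right (inv_nonneg.mpr hc.le)
    calc c • (a ⊔ b) ≤ c • (c⁻¹ • (c • a ⊔ c • b)) :=
          smul_le_smul_of_nonneg_left (sup_le h1 h2) hc.le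
      _ = c • a ⊔ c • b := smul_inv_smul₀ hc.ne' _
  · exact sup_le (smul_le_smul_of_nonneg_left le_sup_left hc.le)
      (smul_le_smul_of_nonneg_left le_sup_right hc.le)

private lemma my_smul_inf {c : ℝ} (hc : 0 < c) (a b : X) : c • (a ⊓ b) = c • a ⊓ c • b := by
  have := my_smul_sup hc (-a) (-b)
  have h2 : a ⊓ b = -(-a ⊔ -b) := by rw [neg_sup, neg_neg, neg_neg]
  rw [h2, smul_neg, this, neg_sup, ← smul_neg, ← smul_neg, neg_neg, neg_neg]

private lemma my_smul_posPart {c : ℝ} (hc : 0 < c) (a : X) : (c • a)⁺ = c • a⁺ := by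
  rw [posPart_def, posPart_def, my_smul_sup hc, smul_zero]

private lemma norm_posPart_le' (a : X) : ‖a⁺‖ ≤ ‖a‖ := by
  apply norm_le_norm_of_abs_le_abs
  rw [abs_of_nonneg (posPart_nonneg a)]
  exact sup_le (le_abs_self a) (abs_nonneg a)

private lemma norm_le_of_nonneg_le {a b : X} (ha : 0 ≤ a) (hab : a ≤ b) : ‖a‖ ≤ ‖b‖ := by
  apply norm_le_norm_of_abs_le_abs
  rw [abs_of_nonneg ha, abs_of_nonneg (ha.trans hab)]
  exact hab

/-- `(a - b)⁺ = a ⊔ b - b` in a lattice ordered group. -/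
private lemma posPart_sub_eq (a b : X) : (a - b)⁺ = (a ⊔ b) - b := by
  rw [posPart_def, sub_eq_add_neg (a ⊔ b) b, sup_add a b (-b), add_neg_cancel,
    ← sub_eq_add_neg]

/-- The key disjointness fact: `x⁺ ⊓ s • x⁻ = 0` for `s ≥ 0`. -/
private lemma posPart_inf_smul_negPart (x : X) {s : ℝ} (hs : 0 ≤ s) : x⁺ ⊓ s • x⁻ = 0 := by
  apply le_antisymm
  · rcases le_or_gt s 1 with h1 | h1
    · have : s • x⁻ ≤ x⁻ := by
        have := smul_le_smul_of_nonneg_right h1 (negPart_nonneg x)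
        rwa [one_smul] at this
      calc x⁺ ⊓ s • x⁻ ≤ x⁺ ⊓ x⁻ := inf_le_inf_left _ this
        _ = 0 := posPart_inf_negPart_eq_zero x
    · have hxp : x⁺ ≤ s • x⁺ := by
        have := smul_le_smul_of_nonneg_right h1.le (posPart_nonneg x)
        rwa [one_smul] at this
      calc x⁺ ⊓ s • x⁻ ≤ s • x⁺ ⊓ s • x⁻ := inf_le_inf_right _ hxp
        _ = s • (x⁺ ⊓ x⁻) := (my_smul_inf (lt_trans one_pos h1) _ _).symm
        _ = 0 := by rw [posPart_inf_negPart_eq_zero, smul_zero]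
  · exact le_inf (posPart_nonneg x) (smul_nonneg hs (negPart_nonneg x))

/-- `(x⁺ - s • x⁻)⁺ = x⁺` for `s ≥ 0`. -/
private lemma posPart_sub_smul_negPart (x : X) {s : ℝ} (hs : 0 ≤ s) :
    (x⁺ - s • x⁻)⁺ = x⁺ := by
  have hsup : x⁺ ⊔ s • x⁻ = x⁺ + s • x⁻ := by
    have := inf_add_sup (x⁺) (s • x⁻)
    rw [posPart_inf_smul_negPart x hs, zero_add] at this
    exact this
  rw [posPart_sub_eq, hsup, add_sub_cancel_right]

/-- Existence of a norm-one positive functional `f` with `f x = ‖x⁺‖`. -/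
private lemma exists_positive_norming [CompleteSpace X] (x : X) (hx : x⁺ ≠ 0) :
    ∃ f : X →L[ℝ] ℝ, (∀ z : X, 0 ≤ z → 0 ≤ f z) ∧ ‖f‖ = 1 ∧ f x = ‖x⁺‖ := by
  set v : X := x⁻ with hv
  set A : X → Set ℝ := fun z => (fun s : ℝ => ‖(z - s • v)⁺‖) '' Set.Ici 0 with hA
  have hAne : ∀ z, (A z).Nonempty := fun z => ⟨‖(z - (0:ℝ) • v)⁺‖, ⟨0, Set.self_mem_Ici, rfl⟩⟩
  have hAbdd : ∀ z, BddBelow (A z) := fun z => ⟨0, fun r hr => by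
    obtain ⟨s, _, rfl⟩ := hr; exact norm_nonneg _⟩
  set N : X → ℝ := fun z => sInf (A z) with hN
  have N_le : ∀ z, ∀ s : ℝ, 0 ≤ s → N z ≤ ‖(z - s • v)⁺‖ := fun z s hs =>
    csInf_le (hAbdd z) ⟨s, hs, rfl⟩
  have N_nonneg : ∀ z, 0 ≤ N z := fun z =>
    le_csInf (hAne z) (fun r hr => by obtain ⟨s, _, rfl⟩ := hr; exact norm_nonneg _)
  -- homogeneity
  have Nsmul_le : ∀ c : ℝ, 0 < c → ∀ z, N (c • z) ≤ c * N z := by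
    intro c hc z
    have key : ∀ r ∈ A z, N (c • z) / c ≤ r := by
      rintro r ⟨s, hs, rfl⟩
      dsimp only
      rw [div_le_iff₀ hc, mul_comm]
      have heq : c • z - (c * s) • v = c • (z - s • v) := by
        rw [smul_sub, mul_smul]
      calc N (c • z) ≤ ‖(c • z - (c * s) • v)⁺‖ := N_le _ _ (mul_nonneg hc.le hs)
        _ = c * ‖(z - s • v)⁺‖ := by
            rw [heq, my_smul_posPart hc, norm_smul, Real.norm_eq_abs, abs_of_pos hc]
    have := le_csInf (hAne z) key
    rw [div_le_iff₀ hc] at this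
    linarith [this]
  have N_hom : ∀ c : ℝ, 0 < c → ∀ z, N (c • z) = c * N z := by
    intro c hc z
    refine le_antisymm (Nsmul_le c hc z) ?_
    have := Nsmul_le c⁻¹ (inv_pos.mpr hc) (c • z)
    rw [inv_smul_smul₀ hc.ne'] at this
    calc c * N z ≤ c * (c⁻¹ * N (c • z)) := by
          exact mul_le_mul_of_nonneg_left this hc.le
      _ = N (c • z) := by field_simp
  -- subadditivity
  have N_add : ∀ z w, N (z + w) ≤ N z + N w := by
    intro z w
    have key : ∀ s : ℝ, 0 ≤ s → ∀ t : ℝ, 0 ≤ t →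
        N (z + w) ≤ ‖(z - s • v)⁺‖ + ‖(w - t • v)⁺‖ := by
      intro s hs t ht
      have hle : ((z + w) - (s + t) • v)⁺ ≤ (z - s • v)⁺ + (w - t • v)⁺ := by
        rw [posPart_def]
        refine sup_le ?_ (add_nonneg (posPart_nonneg _) (posPart_nonneg _))
        have : (z + w) - (s + t) • v = (z - s • v) + (w - t • v) := by
          rw [add_smul]; abel
        rw [this]
        exact add_le_add (le_posPart _) (le_posPart _)
      calc N (z + w) ≤ ‖((z + w) - (s + t) • v)⁺‖ := N_le _ _ (add_nonneg hs ht)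
        _ ≤ ‖(z - s • v)⁺ + (w - t • v)⁺‖ := norm_le_of_nonneg_le (posPart_nonneg _) hle
        _ ≤ ‖(z - s • v)⁺‖ + ‖(w - t • v)⁺‖ := norm_add_le _ _
    have h1 : ∀ t : ℝ, 0 ≤ t → N (z + w) - ‖(w - t • v)⁺‖ ≤ N z := by
      intro t ht
      refine le_csInf (hAne z) ?_
      rintro r ⟨s, hs, rfl⟩
      dsimp only
      have := key s hs t ht
      linarith
    have h2 : N (z + w) - N z ≤ N w := by
      refine le_csInf (hAne w) ?_
      rintro r ⟨t, ht, rfl⟩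
      dsimp only
      have := h1 t ht
      linarith
    linarith
  -- domination data on the span of x⁺
  have hH : ∀ c : ℝ, c • x⁺ = 0 → c • (‖x⁺‖ : ℝ) = 0 := by
    intro c hc
    rcases smul_eq_zero.mp hc with h | h
    · rw [h, zero_smul]
    · exact absurd h hx
  have hNxp : ∀ c : ℝ, 0 < c → N (c • x⁺) = c * ‖x⁺‖ := by
    intro c hc
    have : ∀ r ∈ A (c • x⁺), r = c * ‖x⁺‖ := by
      rintro r ⟨s, hs, rfl⟩
      dsimp only
      have heq : c • x⁺ - s • v = c • (x⁺ - (s / c) • v) := by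
        rw [smul_sub, smul_smul, mul_div_cancel₀ _ hc.ne']
      rw [heq, my_smul_posPart hc, posPart_sub_smul_negPart x (div_nonneg hs hc.le),
        norm_smul, Real.norm_eq_abs, abs_of_pos hc]
    apply le_antisymm
    · exact csInf_le (hAbdd _) ⟨1, Set.mem_Ici.mpr zero_le_one, (this _ ⟨1, Set.mem_Ici.mpr zero_le_one, rfl⟩)⟩
    · exact le_csInf (hAne _) (fun r hr => (this r hr).ge)
  have hdom : ∀ y : (LinearPMap.mkSpanSingleton' (σ := RingHom.id ℝ) x⁺ (‖x⁺‖ : ℝ) hH).domain,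
      (LinearPMap.mkSpanSingleton' (σ := RingHom.id ℝ) x⁺ (‖x⁺‖ : ℝ) hH) y ≤ N y := by
    intro y
    have hy : (y : X) ∈ Submodule.span ℝ {x⁺} := y.2
    obtain ⟨c, hc⟩ := Submodule.mem_span_singleton.mp hy
    have hyval : (LinearPMap.mkSpanSingleton' (σ := RingHom.id ℝ) x⁺ (‖x⁺‖ : ℝ) hH) y = c * ‖x⁺‖ := by
      have h1 : y = ⟨c • x⁺, by rw [hc]; exact y.2⟩ := Subtype.ext hc.symm
      rw [h1, LinearPMap.mkSpanSingleton'_apply]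
      simp [smul_eq_mul]
    rw [hyval, ← hc]
    rcases lt_or_ge 0 c with hcpos | hcnonpos
    · rw [hNxp c hcpos]
    · calc c * ‖x⁺‖ ≤ 0 := mul_nonpos_of_nonpos_of_nonneg hcnonpos (norm_nonneg _)
        _ ≤ N (c • x⁺) := N_nonneg _
  obtain ⟨g, hg_ext, hg_le⟩ := exists_extension_of_le_sublinear
    (LinearPMap.mkSpanSingleton' (σ := RingHom.id ℝ) x⁺ (‖x⁺‖ : ℝ) hH) N N_hom N_add hdom
  -- bounds on g
  have hNle_norm : ∀ z, N z ≤ ‖z‖ := by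
    intro z
    calc N z ≤ ‖(z - (0:ℝ) • v)⁺‖ := N_le z 0 le_rfl
      _ = ‖z⁺‖ := by rw [zero_smul, sub_zero]
      _ ≤ ‖z‖ := norm_posPart_le' z
  have hg_bound : ∀ z, ‖g z‖ ≤ 1 * ‖z‖ := by
    intro z
    rw [one_mul, Real.norm_eq_abs, abs_le]
    constructor
    · have := (hg_le (-z)).trans (hNle_norm (-z))
      rw [map_neg, norm_neg] at this
      linarith
    · exact (hg_le z).trans (hNle_norm z)
  set f : X →L[ℝ] ℝ := g.mkContinuous 1 hg_bound with hf
  have hf_apply : ∀ z, f z = g z := fun z => rfl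
  have hgxp : g x⁺ = ‖x⁺‖ := by
    have hmem : x⁺ ∈ (LinearPMap.mkSpanSingleton' (σ := RingHom.id ℝ) x⁺ (‖x⁺‖ : ℝ) hH).domain :=
      Submodule.mem_span_singleton_self _
    exact (hg_ext ⟨x⁺, hmem⟩).trans (LinearPMap.mkSpanSingleton'_apply_self _ _ _ _)
  have hpos : ∀ z : X, 0 ≤ z → 0 ≤ f z := by
    intro z hz
    have h1 : g (-z) ≤ N (-z) := hg_le (-z)
    have h2 : N (-z) ≤ ‖(-z)⁺‖ := by
      calc N (-z) ≤ ‖(-z - (0:ℝ) • v)⁺‖ := N_le _ 0 le_rfl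
        _ = ‖(-z)⁺‖ := by rw [zero_smul, sub_zero]
    have h3 : (-z)⁺ = 0 := posPart_eq_zero.mpr (neg_nonpos.mpr hz)
    rw [hf_apply]
    rw [map_neg] at h1
    rw [h3, norm_zero] at h2
    linarith
  have hxp_pos : 0 < ‖x⁺‖ := norm_pos_iff.mpr hx
  have hfnorm : ‖f‖ = 1 := by
    apply le_antisymm (g.mkContinuous_norm_le zero_le_one hg_bound)
    have := f.ratio_le_opNorm x⁺
    rw [hf_apply, hgxp, Real.norm_eq_abs, abs_of_pos hxp_pos, div_self hxp_pos.ne'] at this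
    exact this
  have hfxn : f x⁻ = 0 := by
    have h1 : f x⁻ ≤ N x⁻ := hg_le x⁻
    have h2 : N x⁻ ≤ 0 := by
      have := N_le x⁻ 1 zero_le_one
      rw [one_smul, ← hv, sub_self] at this
      simpa using this
    have h3 : 0 ≤ f x⁻ := hpos x⁻ (negPart_nonneg x)
    linarith
  refine ⟨f, hpos, hfnorm, ?_⟩
  have : f x = f x⁺ - f x⁻ := by
    rw [← map_sub]
    congr 1
    exact (posPart_sub_negPart x).symm
  rw [this, hfxn, sub_zero, hf_apply, hgxp]

end Helpers

/-- The *Bishop–Phelps–Bollobás property for positive functionals* of a Banach lattice. -/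
def BPBppPositive (X : Type*) [NormedAddCommGroup X] [Lattice X] [IsOrderedAddMonoid X] [HasSolidNorm X] [NormedSpace ℝ X] : Prop :=
  ∀ ε : ℝ, 0 < ε → ε < 1 → ∃ η : ℝ, 0 < η ∧ η < ε ∧
    ∀ f : X →L[ℝ] ℝ, (∀ z : X, 0 ≤ z → 0 ≤ f z) → ‖f‖ = 1 →
      ∀ x₀ : X, ‖x₀‖ = 1 → 1 - η < f x₀ →
        ∃ (y : X) (g : X →L[ℝ] ℝ), ‖y‖ = 1 ∧
          (∀ z : X, 0 ≤ z → 0 ≤ g z) ∧ ‖g‖ = 1 ∧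
          g y = 1 ∧ ‖y - x₀‖ < ε ∧ ‖g - f‖ < ε

/-- A Banach lattice is *weakly monotone* (WM) if for every `0 < ε < 1` there is `0 < δ < ε`
such that whenever `‖x‖ ≤ 1` and `‖x⁺‖ > 1 - δ`, there exists `y` with `‖y‖ = 1`,
`‖y⁺‖ = 1` and `‖y - x‖ < ε`. -/
def WeaklyMonotoneLattice (X : Type*) [NormedAddCommGroup X] [Lattice X] [IsOrderedAddMonoid X] [HasSolidNorm X] : Prop :=
  ∀ ε : ℝ, 0 < ε → ε < 1 → ∃ δ : ℝ, 0 < δ ∧ δ < ε ∧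
    ∀ x : X, ‖x‖ ≤ 1 → 1 - δ < ‖x ⊔ 0‖ →
      ∃ y : X, ‖y‖ = 1 ∧ ‖y ⊔ 0‖ = 1 ∧ ‖y - x‖ < ε

/-- A Banach lattice with the Bishop–Phelps–Bollobás property for positive
functionals is weakly monotone. -/
theorem stmt7 (X : Type*) [NormedAddCommGroup X] [Lattice X] [IsOrderedAddMonoid X] [HasSolidNorm X] [NormedSpace ℝ X]
    [PosSMulStrictMono ℝ X] [PosSMulReflectLT ℝ X] [CompleteSpace X] (h : BPBppPositive X) :
    WeaklyMonotoneLattice X := by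
  intro ε hε hε1
  obtain ⟨η, hη0, hηε2, hBPB⟩ := h (ε / 2) (by linarith) (by linarith)
  refine ⟨η, hη0, by linarith, ?_⟩
  intro x hx1 hx2
  rw [← posPart_def] at hx2
  have hη12 : η < 1 / 2 := by linarith
  have hxp_pos : 0 < ‖x⁺‖ := by linarith
  have hxp_ne : x⁺ ≠ 0 := norm_pos_iff.mp hxp_pos
  have hxpx : ‖x⁺‖ ≤ ‖x‖ := norm_posPart_le' x
  have hxn_pos : 0 < ‖x‖ := lt_of_lt_of_le hxp_pos hxpx
  have hx_ne : x ≠ 0 := norm_pos_iff.mp hxn_pos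
  obtain ⟨f, hf_pos, hf_norm, hf_x⟩ := exists_positive_norming x hxp_ne
  set x₀ : X := ‖x‖⁻¹ • x with hx₀
  have hx₀_norm : ‖x₀‖ = 1 := by
    rw [hx₀, norm_smul, Real.norm_eq_abs, abs_of_pos (inv_pos.mpr hxn_pos),
      inv_mul_cancel₀ hxn_pos.ne']
  have hinv_ge : 1 ≤ ‖x‖⁻¹ := (one_le_inv₀ hxn_pos).mpr hx1
  have hfx₀ : 1 - η < f x₀ := by
    have : f x₀ = ‖x‖⁻¹ * ‖x⁺‖ := by rw [hx₀, map_smul, smul_eq_mul, hf_x]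
    rw [this]
    calc 1 - η < ‖x⁺‖ := hx2
      _ = 1 * ‖x⁺‖ := (one_mul _).symm
      _ ≤ ‖x‖⁻¹ * ‖x⁺‖ := mul_le_mul_of_nonneg_right hinv_ge hxp_pos.le
  obtain ⟨y, g, hy_norm, hg_pos, hg_norm, hgy, hyx₀, hgf⟩ :=
    hBPB f hf_pos hf_norm x₀ hx₀_norm hfx₀
  refine ⟨y, hy_norm, ?_, ?_⟩
  · -- ‖y ⊔ 0‖ = 1
    rw [← posPart_def]
    apply le_antisymm
    · calc ‖y⁺‖ ≤ ‖y‖ := norm_posPart_le' y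
        _ = 1 := hy_norm
    · have h1 : g y ≤ g y⁺ := by
        have : 0 ≤ g (y⁺ - y) := by
          apply hg_pos
          rw [sub_nonneg]
          exact le_posPart y
        rw [map_sub] at this
        linarith
      have h2 : g y⁺ ≤ ‖y⁺‖ := by
        calc g y⁺ ≤ ‖g y⁺‖ := le_abs_self _
          _ ≤ ‖g‖ * ‖y⁺‖ := g.le_opNorm _
          _ = ‖y⁺‖ := by rw [hg_norm, one_mul]
      linarith [hgy ▸ h1]
  · -- ‖y - x‖ < ε
    have hx₀x : ‖x₀ - x‖ = 1 - ‖x‖ := by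
      have heq : x₀ - x = (‖x‖⁻¹ - 1) • x := by
        rw [hx₀, sub_smul, one_smul]
      rw [heq, norm_smul, Real.norm_eq_abs, abs_of_nonneg (by linarith), sub_mul,
        inv_mul_cancel₀ hxn_pos.ne', one_mul]
    have hxgt : 1 - η < ‖x‖ := lt_of_lt_of_le hx2 hxpx
    calc ‖y - x‖ = ‖(y - x₀) + (x₀ - x)‖ := by congr 1; abel
      _ ≤ ‖y - x₀‖ + ‖x₀ - x‖ := norm_add_le _ _
      _ < ε / 2 + (1 - ‖x‖) := by rw [hx₀x]; linarith
      _ < ε / 2 + η := by linarith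
      _ < ε := by linarith
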